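/- (Decomposition into fundamental Horadam numbers) For every natural number n ≥ 1: G n = (h n)·G 1 + b·(h(n−1))·G 0 + p·( d^n − d·(h n) − b·(h(n−1)) ). -/

import Mathlib

theorem stmt_16 (a b c d : ℝ) (ha : 0 < a) (hb : 0 < b) (hc : 0 ≤ c) (hd : 0 ≤ d)
    (hden : d^2 - a*d - b ≠ 0)
    (p : ℝ) (hp : p = c * d^2 / (d^2 - a*d - b))
    (G : ℕ → ℝ)
    (hG : ∀ n : ℕ, 2 ≤ n → G n = a * G (n-1) + b * G (n-2) + c * d^n)
    (h : ℕ → ℝ) (hh0 : h 0 = 0) (hh1 : h 1 = 1)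
    (hhrec : ∀ n : ℕ, 2 ≤ n → h n = a * h (n-1) + b * h (n-2)) :
    ∀ n : ℕ, 1 ≤ n →
      G n = h n * G 1 + b * h (n-1) * G 0 + p * (d^n - d * h n - b * h (n-1)) := by
  have key : p * (d^2 - a*d - b) = c * d^2 := by
    rw [hp]; exact div_mul_cancel₀ _ hden
  intro n
  induction n using Nat.strong_induction_on with
  | _ n ih =>
    match n with
    | 0 => intro hn; omega
    | 1 => intro _; simp [hh1, hh0]
    | 2 =>
      intro _
      rw [hG 2 le_rfl, hhrec 2 le_rfl]
      simp only [hh1, hh0]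
      norm_num
      linear_combination -key
    | (n+3) =>
      intro _
      have e1 := ih (n+2) (by omega) (by omega)
      have e2 := ih (n+1) (by omega) (by omega)
      have hGr := hG (n+3) (by omega)
      have hhr := hhrec (n+3) (by omega)
      have hhr2 := hhrec (n+2) (by omega)
      simp only [show (n+3)-1 = n+2 from rfl, show (n+3)-2 = n+1 from rfl,
        show (n+2)-1 = n+1 from rfl, show (n+1)-1 = n from rfl, show (n+2)-2 = n from rfl] at *
      rw [hGr, e1, e2, hhr, hhr2]
      linear_combination -(d^(n+1)) * key
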